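/- For all x, y in [-R, R], the expectation E_{(w,b)}[(wx+b)_+² · (wy+b)_+²], where w is uniform on {-1,1} and b uniform on [-R,R], equals R⁴/10 + (2R²xy)/3 + (R²/6)(x²+y²) + x²y²/2 - |x-y|⁵/(120R). -/

import Mathlib

open MeasureTheory intervalIntegral

lemma polyint (a c x y : ℝ) :
    ∫ b in a..c, (x + b) ^ 2 * (y + b) ^ 2 =
      (c ^ 5 / 5 + (x + y) * c ^ 4 / 2 + ((x + y) ^ 2 + 2 * (x * y)) * c ^ 3 / 3
          + (x + y) * (x * y) * c ^ 2 + (x * y) ^ 2 * c)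
      - (a ^ 5 / 5 + (x + y) * a ^ 4 / 2 + ((x + y) ^ 2 + 2 * (x * y)) * a ^ 3 / 3
          + (x + y) * (x * y) * a ^ 2 + (x * y) ^ 2 * a) := by
  apply intervalIntegral.integral_eq_sub_of_hasDerivAt (f := fun b =>
      b ^ 5 / 5 + (x + y) * b ^ 4 / 2 + ((x + y) ^ 2 + 2 * (x * y)) * b ^ 3 / 3
        + (x + y) * (x * y) * b ^ 2 + (x * y) ^ 2 * b)
  · intro b _
    have h : HasDerivAt (fun b : ℝ =>
        b ^ 5 / 5 + (x + y) * b ^ 4 / 2 + ((x + y) ^ 2 + 2 * (x * y)) * b ^ 3 / 3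
          + (x + y) * (x * y) * b ^ 2 + (x * y) ^ 2 * b)
        (5 * b ^ 4 / 5 + (x + y) * (4 * b ^ 3) / 2 + ((x + y) ^ 2 + 2 * (x * y)) * (3 * b ^ 2) / 3
          + (x + y) * (x * y) * (2 * b ^ 1) + (x * y) ^ 2 * 1) b := by
      exact ((((((hasDerivAt_pow 5 b).div_const 5).add
        (((hasDerivAt_pow 4 b).const_mul (x + y)).div_const 2)).add
        (((hasDerivAt_pow 3 b).const_mul ((x + y) ^ 2 + 2 * (x * y))).div_const 3)).add
        ((hasDerivAt_pow 2 b).const_mul ((x + y) * (x * y)))).add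
        ((hasDerivAt_id b).const_mul ((x * y) ^ 2)))
    refine h.congr_deriv ?_
    beta_reduce
    ring
  · exact (Continuous.intervalIntegrable (by continuity) _ _)

lemma key (R x y : ℝ) (hx : x ∈ Set.Icc (-R) R) (hxy : x ≤ y) :
    ∫ b in (-R)..R, max (x + b) 0 ^ 2 * max (y + b) 0 ^ 2
      = ∫ b in (-x)..R, (x + b) ^ 2 * (y + b) ^ 2 := by
  obtain ⟨hx1, hx2⟩ := hx
  have hc : Continuous fun b : ℝ => max (x + b) 0 ^ 2 * max (y + b) 0 ^ 2 := by continuity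
  have hsplit :
      (∫ b in (-R)..(-x), max (x + b) 0 ^ 2 * max (y + b) 0 ^ 2)
        + (∫ b in (-x)..R, max (x + b) 0 ^ 2 * max (y + b) 0 ^ 2)
        = ∫ b in (-R)..R, max (x + b) 0 ^ 2 * max (y + b) 0 ^ 2 :=
    intervalIntegral.integral_add_adjacent_intervals (hc.intervalIntegrable _ _)
      (hc.intervalIntegrable _ _)
  have h1 : ∫ b in (-R)..(-x), max (x + b) 0 ^ 2 * max (y + b) 0 ^ 2 = 0 := by
    have h0 : ∫ b in (-R)..(-x), max (x + b) 0 ^ 2 * max (y + b) 0 ^ 2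
        = ∫ b in (-R)..(-x), (0 : ℝ) := by
      apply intervalIntegral.integral_congr
      intro b hb
      rw [Set.uIcc_of_le (by linarith)] at hb
      have hb2 : x + b ≤ 0 := by have := hb.2; linarith
      dsimp only
      rw [max_eq_right hb2]
      ring
    simpa using h0
  have h2 : ∫ b in (-x)..R, max (x + b) 0 ^ 2 * max (y + b) 0 ^ 2
      = ∫ b in (-x)..R, (x + b) ^ 2 * (y + b) ^ 2 := by
    apply intervalIntegral.integral_congr
    intro b hb
    rw [Set.uIcc_of_le (by linarith)] at hb
    have hxb : 0 ≤ x + b := by have := hb.1; linarith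
    have hyb : 0 ≤ y + b := by linarith
    dsimp only
    rw [max_eq_left hxb, max_eq_left hyb]
  rw [← hsplit, h1, h2, zero_add]

lemma stmt2_aux (R x y : ℝ) (hR : 0 < R) (hx : x ∈ Set.Icc (-R) R) (hy : y ∈ Set.Icc (-R) R)
    (hxy : x ≤ y) :
    (1 / 2) * ((1 / (2 * R)) * ∫ b in (-R)..R, max (x + b) 0 ^ 2 * max (y + b) 0 ^ 2)
      + (1 / 2) * ((1 / (2 * R)) * ∫ b in (-R)..R, max (-x + b) 0 ^ 2 * max (-y + b) 0 ^ 2)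
    = R ^ 4 / 10 + 2 * R ^ 2 * (x * y) / 3 + (R ^ 2 / 6) * (x ^ 2 + y ^ 2)
        + x ^ 2 * y ^ 2 / 2 - |x - y| ^ 5 / (120 * R) := by
  have e1 := key R x y hx hxy
  have e2' := key R (-y) (-x) (by constructor <;> [linarith [hy.2]; linarith [hy.1]])
    (by linarith)
  have e2 : ∫ b in (-R)..R, max (-x + b) 0 ^ 2 * max (-y + b) 0 ^ 2
      = ∫ b in (- -y)..R, (-y + b) ^ 2 * (-x + b) ^ 2 := by
    rw [← e2']
    apply intervalIntegral.integral_congr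
    intro b _
    ring
  rw [e1, e2, polyint, polyint]
  have habs : |x - y| = y - x := by rw [abs_sub_comm]; exact abs_of_nonneg (by linarith)
  rw [habs]
  field_simp
  ring
  
/-- For `x, y ∈ [-R, R]`, with `w` uniform on `{-1, 1}` and `b` uniform on `[-R, R]`
independent, `E[(wx+b)_+² (wy+b)_+²]
  = R⁴/10 + 2R²xy/3 + (R²/6)(x²+y²) + x²y²/2 - |x-y|⁵/(120R)`. -/
theorem stmt2 (R x y : ℝ) (hR : 0 < R) (hx : x ∈ Set.Icc (-R) R) (hy : y ∈ Set.Icc (-R) R) :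
    (1 / 2) * ((1 / (2 * R)) * ∫ b in (-R)..R, max (x + b) 0 ^ 2 * max (y + b) 0 ^ 2)
      + (1 / 2) * ((1 / (2 * R)) * ∫ b in (-R)..R, max (-x + b) 0 ^ 2 * max (-y + b) 0 ^ 2)
    = R ^ 4 / 10 + 2 * R ^ 2 * (x * y) / 3 + (R ^ 2 / 6) * (x ^ 2 + y ^ 2)
        + x ^ 2 * y ^ 2 / 2 - |x - y| ^ 5 / (120 * R) := by
  rcases le_total x y with h | h
  · exact stmt2_aux R x y hR hx hy h
  · have := stmt2_aux R y x hR hy hx h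
    have c1 : ∫ b in (-R)..R, max (y + b) 0 ^ 2 * max (x + b) 0 ^ 2
        = ∫ b in (-R)..R, max (x + b) 0 ^ 2 * max (y + b) 0 ^ 2 := by
      apply intervalIntegral.integral_congr; intro b _; ring
    have c2 : ∫ b in (-R)..R, max (-y + b) 0 ^ 2 * max (-x + b) 0 ^ 2
        = ∫ b in (-R)..R, max (-x + b) 0 ^ 2 * max (-y + b) 0 ^ 2 := by
      apply intervalIntegral.integral_congr; intro b _; ring
    rw [c1, c2, abs_sub_comm y x] at this
    rw [this]; ring
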